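/- Let K ≥ 1 be a real number. For all sufficiently large primes p the following holds: if a₁, ..., a_k are residues modulo p (0 ≤ aᵢ ≤ p−1) with k < (log p)/(2K log log p), then there exists an integer n with 1 ≤ n ≤ p−1 such that ‖aᵢ n / p‖ < 1/(log p)^K for every i = 1, 2, ..., k. -/
import Mathlib

/-- `‖x‖`, the distance from `x` to the nearest integer. -/
noncomputable def distToNearestInt (x : ℝ) : ℝ := |x - round x|

/-- Dirichlet pigeonhole lemma: let `K ≥ 1`. For all sufficiently large primes `p`, if
`a₁, ..., a_k` are residues mod `p` (with `0 ≤ aᵢ ≤ p - 1`) and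
`k < log p / (2 K log log p)`, then there is an integer `1 ≤ n ≤ p - 1` with
`‖aᵢ n / p‖ < 1 / (log p)^K` for every `i`. -/
theorem dirichlet_bohr_lemma (K : ℝ) (hK : 1 ≤ K) :
    ∃ p₀ : ℕ, ∀ p : ℕ, p.Prime → p₀ ≤ p →
      ∀ (k : ℕ) (a : Fin k → ℕ), (∀ i, a i ≤ p - 1) →
        (k : ℝ) < Real.log p / (2 * K * Real.log (Real.log p)) →
        ∃ n : ℕ, 1 ≤ n ∧ n ≤ p - 1 ∧
          ∀ i : Fin k, distToNearestInt ((a i * n : ℕ) / (p : ℝ)) < 1 / Real.log p ^ K := by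
  refine ⟨8, fun p hp hp8 k a ha hk => ?_⟩
  have hp0 : 0 < p := hp.pos
  have hpR : (8 : ℝ) ≤ (p : ℝ) := by exact_mod_cast hp8
  have hpRpos : (0 : ℝ) < p := by positivity
  set L := Real.log p with hL
  have hL2 : (2 : ℝ) ≤ L := by
    rw [hL, show (2:ℝ) = Real.log (Real.exp 2) by rw [Real.log_exp]]
    apply Real.log_le_log (Real.exp_pos 2)
    have h := Real.exp_one_lt_d9
    calc Real.exp 2 = Real.exp 1 * Real.exp 1 := by rw [← Real.exp_add]; norm_num
      _ ≤ 2.7182818286 * 2.7182818286 := by nlinarith [Real.exp_pos 1]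
      _ ≤ 8 := by norm_num
      _ ≤ (p : ℝ) := hpR
  have hLpos : (0 : ℝ) < L := by linarith
  have hllL : Real.log 2 ≤ Real.log L := Real.log_le_log (by norm_num) hL2
  have hll_pos : (0 : ℝ) < Real.log L := lt_of_lt_of_le (Real.log_pos (by norm_num) : (0:ℝ) < Real.log 2) hllL
  have hK0 : (0 : ℝ) < K := by linarith
  have hLK1 : (1 : ℝ) ≤ L ^ K := Real.one_le_rpow (by linarith) (by linarith)
  have hLKpos : (0 : ℝ) < L ^ K := by linarith
  set M : ℕ := ⌈L ^ K⌉₊ with hMdef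
  have hM1 : 1 ≤ M := Nat.one_le_iff_ne_zero.mpr (by
    simp [hMdef, Nat.ceil_eq_zero, not_le, hLKpos])
  have hMge : L ^ K ≤ (M : ℝ) := Nat.le_ceil _
  have hMle : (M : ℝ) ≤ 2 * L ^ K := by
    calc (M : ℝ) ≤ L ^ K + 1 := le_of_lt (Nat.ceil_lt_add_one (le_of_lt hLKpos))
      _ ≤ 2 * L ^ K := by linarith
  have hMpos : (0 : ℝ) < (M : ℝ) := by exact_mod_cast hM1
  -- counting : M ^ k < p
  have hcard : M ^ k < p := by
    have h2K : 0 < 2 * K * Real.log L := by positivity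
    have hkL : (k : ℝ) * (2 * K * Real.log L) < L := (lt_div_iff₀ h2K).mp hk
    have hMR : ((M : ℝ)) ^ k < (p : ℝ) := by
      have h1 : ((M:ℝ)) ^ k ≤ (2 * L ^ K) ^ k :=
        pow_le_pow_left₀ (le_of_lt hMpos) hMle k
      have h2 : (2 * L ^ K) ^ k = Real.exp ((k : ℝ) * (Real.log 2 + K * Real.log L)) := by
        rw [← Real.exp_log (show (0:ℝ) < 2 * L ^ K by positivity), ← Real.exp_nat_mul]
        congr 1
        rw [Real.log_mul (by norm_num) (ne_of_gt hLKpos), Real.log_rpow hLpos]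
      have h3 : (k : ℝ) * (Real.log 2 + K * Real.log L) ≤ (k:ℝ) * (2 * K * Real.log L) := by
        apply mul_le_mul_of_nonneg_left _ (Nat.cast_nonneg k)
        have : Real.log 2 ≤ K * Real.log L := by
          calc Real.log 2 ≤ Real.log L := hllL
            _ = 1 * Real.log L := (one_mul _).symm
            _ ≤ K * Real.log L := by
              apply mul_le_mul_of_nonneg_right hK (le_of_lt hll_pos)
        linarith
      calc ((M:ℝ)) ^ k ≤ (2 * L ^ K) ^ k := h1
        _ = Real.exp ((k : ℝ) * (Real.log 2 + K * Real.log L)) := h2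
        _ ≤ Real.exp ((k:ℝ) * (2 * K * Real.log L)) := Real.exp_le_exp.mpr h3
        _ < Real.exp L := Real.exp_lt_exp.mpr hkL
        _ = p := by rw [hL, Real.exp_log hpRpos]
    exact_mod_cast hMR
  -- pigeonhole
  let f : Fin p → (Fin k → Fin M) := fun n i =>
    ⟨(a i * n % p) * M / p, by
      apply Nat.div_lt_of_lt_mul
      exact Nat.mul_lt_mul_of_lt_of_le (Nat.mod_lt _ hp0) (le_refl M) (by omega)⟩
  obtain ⟨n₁, n₂, hne, hfeq⟩ := Fintype.exists_ne_map_eq_of_card_lt f (by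
    simpa [Fintype.card_fun] using hcard)
  -- main argument for an ordered pair
  have key : ∀ m₁ m₂ : Fin p, (m₁ : ℕ) < (m₂ : ℕ) → f m₁ = f m₂ →
      ∃ n : ℕ, 1 ≤ n ∧ n ≤ p - 1 ∧
        ∀ i : Fin k, distToNearestInt ((a i * n : ℕ) / (p : ℝ)) < 1 / L ^ K := by
    intro m₁ m₂ hlt hfe
    refine ⟨(m₂ : ℕ) - (m₁ : ℕ), by omega, by have := m₂.isLt; omega, ?_⟩
    intro i
    set n : ℕ := (m₂ : ℕ) - (m₁ : ℕ) with hn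
    set r₁ : ℕ := a i * m₁ % p with hr₁
    set r₂ : ℕ := a i * m₂ % p with hr₂
    have hdiv : r₁ * M / p = r₂ * M / p := by
      have := congrFun hfe i
      simpa [f, hr₁, hr₂] using congrArg Fin.val this
    -- |r₂ - r₁| * M < p
    have hsmall : |(r₂ : ℤ) - r₁| * M < p := by
      have lb₁ : r₁ * M / p * p ≤ r₁ * M := Nat.div_mul_le_self _ _
      have lb₂ : r₂ * M / p * p ≤ r₂ * M := Nat.div_mul_le_self _ _
      have ub₁ : r₁ * M < (r₁ * M / p + 1) * p :=
        (Nat.div_lt_iff_lt_mul hp0).mp (Nat.lt_succ_self _)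
      have ub₂ : r₂ * M < (r₂ * M / p + 1) * p :=
        (Nat.div_lt_iff_lt_mul hp0).mp (Nat.lt_succ_self _)
      rw [hdiv] at lb₁ ub₁
      have lb₁' : (r₂ * M / p : ℤ) * p ≤ (r₁ : ℤ) * M := by exact_mod_cast lb₁
      have lb₂' : (r₂ * M / p : ℤ) * p ≤ (r₂ : ℤ) * M := by exact_mod_cast lb₂
      have ub₁' : (r₁ : ℤ) * M < ((r₂ * M / p : ℤ) + 1) * p := by exact_mod_cast ub₁
      have ub₂' : (r₂ : ℤ) * M < ((r₂ * M / p : ℤ) + 1) * p := by exact_mod_cast ub₂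
      have habs : |(r₂ : ℤ) * M - r₁ * M| < p := by
        rw [abs_sub_lt_iff]
        constructor <;> nlinarith [lb₁', lb₂', ub₁', ub₂']
      have heq : |(r₂ : ℤ) - r₁| * M = |(r₂ : ℤ) * M - r₁ * M| := by
        rw [show (r₂:ℤ) * M - r₁ * M = ((r₂:ℤ) - r₁) * (M:ℤ) by ring, abs_mul,
          abs_of_nonneg (show (0:ℤ) ≤ (M:ℤ) by positivity)]
      rw [heq]
      exact habs
    -- congruence : a i * n = (r₂ - r₁) + p * t
    set q₁ : ℕ := a i * m₁ / p with hq₁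
    set q₂ : ℕ := a i * m₂ / p with hq₂
    have hd₁ := Nat.div_add_mod (a i * m₁) p
    have hd₂ := Nat.div_add_mod (a i * m₂) p
    have hrep : ((a i * n : ℕ) : ℤ) = ((r₂ : ℤ) - r₁) + p * ((q₂ : ℤ) - q₁) := by
      have hthis : (a i : ℤ) * n = (a i) * m₂ - (a i) * m₁ := by
        push_cast [hn]
        rw [Nat.cast_sub (le_of_lt hlt)]
        ring
      have hd₁' : (p : ℤ) * q₁ + r₁ = (a i : ℤ) * m₁ := by exact_mod_cast hd₁
      have hd₂' : (p : ℤ) * q₂ + r₂ = (a i : ℤ) * m₂ := by exact_mod_cast hd₂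
      push_cast
      linear_combination hthis + hd₁' - hd₂'
    -- real estimate
    have hdist : distToNearestInt ((a i * n : ℕ) / (p : ℝ)) ≤ |(r₂ : ℝ) - r₁| / p := by
      have hle := round_le (((a i * n : ℕ) : ℝ) / p) ((q₂ : ℤ) - q₁)
      unfold distToNearestInt
      refine hle.trans (le_of_eq ?_)
      have : ((a i * n : ℕ) : ℝ) / p - ((q₂ : ℤ) - q₁ : ℤ) = ((r₂ : ℝ) - r₁) / p := by
        have hrepR : ((a i : ℝ)) * n = ((r₂ : ℝ) - r₁) + p * ((q₂ : ℝ) - q₁) := by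
          exact_mod_cast hrep
        rw [eq_div_iff (ne_of_gt hpRpos), sub_mul, div_mul_cancel₀ _ (ne_of_gt hpRpos)]
        push_cast
        linear_combination hrepR
      rw [this, abs_div, abs_of_pos hpRpos]
    have h1M : |(r₂ : ℝ) - r₁| / p < 1 / M := by
      rw [div_lt_div_iff₀ hpRpos hMpos]
      have : (|(r₂ : ℤ) - r₁| : ℝ) * M < p := by exact_mod_cast hsmall
      calc |(r₂ : ℝ) - r₁| * M = (|(r₂ : ℤ) - r₁| : ℝ) * M := by push_cast; ring_nf
        _ < p := this
        _ = 1 * p := (one_mul _).symm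
    have h2M : (1 : ℝ) / M ≤ 1 / L ^ K := by
      apply div_le_div_of_nonneg_left one_pos.le hLKpos hMge |>.trans_eq rfl
    calc distToNearestInt ((a i * n : ℕ) / (p : ℝ)) ≤ |(r₂ : ℝ) - r₁| / p := hdist
      _ < 1 / M := h1M
      _ ≤ 1 / L ^ K := h2M
  rcases (Fin.val_ne_iff.mpr hne).lt_or_gt with h | h
  · exact key n₁ n₂ h hfeq
  · exact key n₂ n₁ h hfeq.symm
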